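/- Let X be extensible and n such that det(C(X_n)) ≠ 0. If ω_n^{(n)} = Σ_i k_i α_i^{(n)} is the expression of the last fundamental weight in terms of simple roots, then k_n = det(C(X_{n−1}))/det(C(X_n)), and consequently the order of [ω_n^{(n)}] in P(X_n)/Q(X_n) equals |det(C(X_n))|. -/

import Mathlib

open scoped BigOperators

def Xmat (d : ℕ) (C : Matrix (Fin d) (Fin d) ℤ) (n : ℕ) : Matrix (Fin n) (Fin n) ℤ :=
  Matrix.of fun i j =>
    if h : (i : ℕ) < d ∧ (j : ℕ) < d then C ⟨i, h.1⟩ ⟨j, h.2⟩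
    else if (i : ℕ) = (j : ℕ) then 2
    else if (i : ℕ) + 1 = (j : ℕ) ∨ (j : ℕ) + 1 = (i : ℕ) then -1
    else 0

def detX (d : ℕ) (C : Matrix (Fin d) (Fin d) ℤ) (n : ℕ) : ℤ := (Xmat d C n).det

def Δdiff (d : ℕ) (C : Matrix (Fin d) (Fin d) ℤ) : ℤ := detX d C d - detX d C (d - 1)

def Extensible (d : ℕ) (C : Matrix (Fin d) (Fin d) ℤ) : Prop :=
  Δdiff d C ≠ 0 ∧ detX d C d ≠ 0 ∧ IsCoprime (Δdiff d C) (detX d C d)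

def fw (n : ℕ) (i : Fin n) : Fin n → ℤ := Pi.single i 1

def col (d : ℕ) (C : Matrix (Fin d) (Fin d) ℤ) (n : ℕ) (j : Fin n) : Fin n → ℤ :=
  fun i => Xmat d C n i j

def Qlat (d : ℕ) (C : Matrix (Fin d) (Fin d) ℤ) (n : ℕ) : Submodule ℤ (Fin n → ℤ) :=
  Submodule.span ℤ (Set.range (col d C n))

def lastFin (n : ℕ) (h : 0 < n) : Fin n := ⟨n - 1, by omega⟩

def ASeq (d : ℕ) (C : Matrix (Fin d) (Fin d) ℤ) (a : ℕ → ℤ) : Prop :=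
  ∀ n, d ≤ n → detX d C n ≠ 0 → ∀ i : Fin n,
    (-(Δdiff d C)) • fw n i - a (i : ℕ) • fw n (lastFin n i.pos) ∈ Qlat d C n

section Aux

lemma det_rec (f : ℕ → ℕ → ℤ) (n : ℕ)
    (hc0 : ∀ i < n, f i (n+1) = 0)
    (hc1 : f n (n+1) = -1)
    (hc2 : f (n+1) (n+1) = 2)
    (hr0 : ∀ j < n, f (n+1) j = 0)
    (hr1 : f (n+1) n = -1) :
    (Matrix.of fun i j : Fin (n+2) => f i j).det
      = 2 * (Matrix.of fun i j : Fin (n+1) => f i j).det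
        - (Matrix.of fun i j : Fin n => f i j).det := by
  set A : Matrix (Fin (n+2)) (Fin (n+2)) ℤ := Matrix.of fun i j => f i j with hA
  rw [Matrix.det_succ_column A (Fin.last (n+1))]
  rw [Fin.sum_univ_castSucc, Fin.sum_univ_castSucc]
  have h0 : ∀ i : Fin n,
      (-1 : ℤ) ^ ((i.castSucc.castSucc : ℕ) + (Fin.last (n+1) : ℕ)) *
        A i.castSucc.castSucc (Fin.last (n+1)) *
        (A.submatrix i.castSucc.castSucc.succAbove (Fin.last (n+1)).succAbove).det = 0 := by
    intro i
    have : A i.castSucc.castSucc (Fin.last (n+1)) = 0 := hc0 i i.isLt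
    rw [this]; ring
  rw [Finset.sum_eq_zero (fun i _ => h0 i), zero_add]
  have hlast : A (Fin.last (n+1)) (Fin.last (n+1)) = 2 := hc2
  have hminor : A.submatrix (Fin.last (n+1)).succAbove (Fin.last (n+1)).succAbove
      = Matrix.of fun i j : Fin (n+1) => f i j := by
    ext i j
    simp [A, Fin.succAbove_last, Matrix.submatrix_apply]
  have hmid : A (Fin.last n).castSucc (Fin.last (n+1)) = -1 := hc1
  set B : Matrix (Fin (n+1)) (Fin (n+1)) ℤ :=
    A.submatrix (Fin.last n).castSucc.succAbove (Fin.last (n+1)).succAbove with hB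
  have hBdet : B.det = - (Matrix.of fun i j : Fin n => f i j).det := by
    rw [Matrix.det_succ_row B (Fin.last n), Fin.sum_univ_castSucc]
    have hz : ∀ j : Fin n,
        (-1 : ℤ) ^ ((Fin.last n : ℕ) + (j.castSucc : ℕ)) * B (Fin.last n) j.castSucc *
          (B.submatrix (Fin.last n).succAbove j.castSucc.succAbove).det = 0 := by
      intro j
      have : B (Fin.last n) j.castSucc = 0 := by
        show A ((Fin.last n).castSucc.succAbove (Fin.last n)) ((Fin.last (n+1)).succAbove j.castSucc) = 0
        rw [Fin.succAbove_last]
        have h1 : (Fin.last n).castSucc.succAbove (Fin.last n) = Fin.last (n+1) := by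
          rw [Fin.succAbove_of_le_castSucc _ _ (le_refl _)]
          simp [Fin.succ_last]
        rw [h1]
        exact hr0 j (by simpa using j.isLt)
      rw [this]; ring
    rw [Finset.sum_eq_zero (fun j _ => hz j), zero_add]
    have hBl : B (Fin.last n) (Fin.last n) = -1 := by
      show A ((Fin.last n).castSucc.succAbove (Fin.last n)) ((Fin.last (n+1)).succAbove (Fin.last n)) = -1
      rw [Fin.succAbove_last]
      have h1 : (Fin.last n).castSucc.succAbove (Fin.last n) = Fin.last (n+1) := by
        rw [Fin.succAbove_of_le_castSucc _ _ (le_refl _)]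
        simp [Fin.succ_last]
      rw [h1]
      exact hr1
    have hBminor : B.submatrix (Fin.last n).succAbove (Fin.last n).succAbove
        = Matrix.of fun i j : Fin n => f i j := by
      ext i j
      simp only [Matrix.submatrix_apply, Fin.succAbove_last, hB]
      have h2 : (Fin.last n).castSucc.succAbove i.castSucc = i.castSucc.castSucc := by
        apply Fin.succAbove_of_castSucc_lt
        simp [Fin.castSucc_lt_castSucc_iff, Fin.castSucc_lt_last]
      rw [h2]
      simp [A]
    rw [hBl, hBminor]
    have : Even ((Fin.last n : ℕ) + (Fin.last n : ℕ)) := ⟨n, by simp⟩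
    rw [this.neg_one_pow]
    ring
  rw [hminor, hBdet, hlast, hmid]
  have he : Even ((Fin.last (n+1) : ℕ) + (Fin.last (n+1) : ℕ)) := ⟨n+1, by simp⟩
  have ho : Odd (((Fin.last n).castSucc : ℕ) + (Fin.last (n+1) : ℕ)) := ⟨n, by simp; ring⟩
  rw [he.neg_one_pow, ho.neg_one_pow]
  ring

def fX (d : ℕ) (C : Matrix (Fin d) (Fin d) ℤ) (i j : ℕ) : ℤ :=
  if h : i < d ∧ j < d then C ⟨i, h.1⟩ ⟨j, h.2⟩
  else if i = j then 2
  else if i + 1 = j ∨ j + 1 = i then -1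
  else 0

lemma Xmat_eq_fX (d : ℕ) (C : Matrix (Fin d) (Fin d) ℤ) (n : ℕ) :
    Xmat d C n = Matrix.of fun i j : Fin n => fX d C i j := rfl

lemma detX_rec (d : ℕ) (C : Matrix (Fin d) (Fin d) ℤ) (n : ℕ) (h : d ≤ n + 1) :
    detX d C (n+2) = 2 * detX d C (n+1) - detX d C n := by
  have hc0 : ∀ i < n, fX d C i (n+1) = 0 := by
    intro i hi
    simp only [fX]
    rw [dif_neg (by omega)]
    rw [if_neg (by omega), if_neg (by omega)]
  have hr0 : ∀ j < n, fX d C (n+1) j = 0 := by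
    intro j hj
    simp only [fX]
    rw [dif_neg (by omega), if_neg (by omega), if_neg (by omega)]
  have hc1 : fX d C n (n+1) = -1 := by
    simp only [fX]
    rw [dif_neg (by omega)]
    simp
  have hc2 : fX d C (n+1) (n+1) = 2 := by
    simp only [fX]
    rw [dif_neg (by omega)]
    simp
  have hr1 : fX d C (n+1) n = -1 := by
    simp only [fX]
    rw [dif_neg (by omega)]
    simp
  simpa only [detX, Xmat_eq_fX] using det_rec (fX d C) n hc0 hc1 hc2 hr0 hr1

lemma detX_diff (d : ℕ) (hd : 1 ≤ d) (C : Matrix (Fin d) (Fin d) ℤ) :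
    ∀ m : ℕ, detX d C (d + m + 1) - detX d C (d + m) = Δdiff d C := by
  intro m
  induction m with
  | zero =>
    have h1 : d + 0 + 1 = (d - 1) + 2 := by omega
    have h2 : d + 0 = (d - 1) + 1 := by omega
    rw [h1, h2, detX_rec d C (d-1) (by omega)]
    have h3 : (d - 1 : ℕ) + 1 = d := by omega
    rw [h3]
    unfold Δdiff; ring
  | succ m ih =>
    have h1 : d + (m + 1) + 1 = (d + m) + 2 := by omega
    have h2 : d + (m + 1) = (d + m) + 1 := by omega
    rw [h1, h2, detX_rec d C (d+m) (by omega)]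
    linarith [ih]

lemma detX_coprime (d : ℕ) (hd : 1 ≤ d) (C : Matrix (Fin d) (Fin d) ℤ)
    (hcop : IsCoprime (Δdiff d C) (detX d C d)) (n : ℕ) (hn : d ≤ n) :
    IsCoprime (detX d C (n - 1)) (detX d C n) := by
  obtain ⟨m, rfl⟩ := Nat.exists_eq_add_of_le hn
  have hval : ∀ m : ℕ, detX d C (d + m) = detX d C d + (m : ℤ) * Δdiff d C := by
    intro m
    induction m with
    | zero => simp
    | succ m ih =>
      have := detX_diff d hd C m
      push_cast
      have h2 : d + (m + 1) = d + m + 1 := by omega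
      rw [h2]
      linarith [ih]
  have hΔn : IsCoprime (Δdiff d C) (detX d C (d + m)) := by
    rw [hval m]
    have := hcop.add_mul_left_right (m : ℤ)
    rw [mul_comm (m : ℤ)]
    exact this
  have hdiff : detX d C (d + m) - detX d C (d + m - 1) = Δdiff d C := by
    cases m with
    | zero => simp [Δdiff]
    | succ m =>
      have h2 : d + (m + 1) - 1 = d + m := by omega
      have h1 : d + (m + 1) = d + m + 1 := by omega
      rw [h2, h1]
      exact detX_diff d hd C m
  have h1 : detX d C (d + m - 1) = -Δdiff d C + detX d C (d + m) * 1 := by linarith [hdiff]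
  rw [h1]
  exact (hΔn.neg_left).add_mul_left_left 1

lemma Xmat_minor (d : ℕ) (C : Matrix (Fin d) (Fin d) ℤ) (m : ℕ) :
    (Xmat d C (m+1)).submatrix Fin.castSucc Fin.castSucc = Xmat d C m := by
  ext i j
  simp [Xmat, Matrix.submatrix_apply]

lemma adjX_last (d : ℕ) (C : Matrix (Fin d) (Fin d) ℤ) (m : ℕ) :
    (Xmat d C (m+1)).adjugate (Fin.last m) (Fin.last m) = detX d C m := by
  rw [Matrix.adjugate_fin_succ_eq_det_submatrix, Fin.succAbove_last]
  have he : Even ((Fin.last m : ℕ) + (Fin.last m : ℕ)) := ⟨m, by simp⟩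
  rw [he.neg_one_pow, one_mul, Xmat_minor]
  rfl

lemma det_map_int {m : ℕ} (A : Matrix (Fin m) (Fin m) ℤ) :
    (A.map (Int.castRingHom ℚ)).det = (A.det : ℚ) := by
  rw [← RingHom.mapMatrix_apply, ← RingHom.map_det]
  rfl

open scoped Matrix

end Aux

open scoped Matrix

/-- If `ω_n = Σ_i k_i α_i` over `ℚ` (the `k_i` are the entries of the last
column of `C(X_n)⁻¹`), then `k_n = det(C(X_{n-1}))/det(C(X_n))`, and the order
of the class of `ω_n` in `P(X_n)/Q(X_n)` equals `|det(C(X_n))|`. -/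
theorem tensor_stab_last_coefficient (d : ℕ) (hd : 1 ≤ d)
    (C : Matrix (Fin d) (Fin d) ℤ) (hX : Extensible d C)
    (n : ℕ) (hn : d ≤ n) (hdet : detX d C n ≠ 0)
    (k : Fin n → ℚ)
    (hk : ∀ i : Fin n, (if i = lastFin n (by omega) then (1 : ℚ) else 0)
        = ∑ j : Fin n, k j * (Xmat d C n i j : ℚ)) :
    k (lastFin n (by omega)) = (detX d C (n - 1) : ℚ) / (detX d C n : ℚ) ∧
    addOrderOf (Submodule.Quotient.mk (fw n (lastFin n (by omega))) :
        (Fin n → ℤ) ⧸ Qlat d C n) = (detX d C n).natAbs := by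
  obtain ⟨m, rfl⟩ : ∃ m, n = m + 1 := ⟨n - 1, by omega⟩
  set M : Matrix (Fin (m+1)) (Fin (m+1)) ℤ := Xmat d C (m+1) with hM
  set Mq : Matrix (Fin (m+1)) (Fin (m+1)) ℚ := M.map (Int.castRingHom ℚ) with hMqdef
  have hdetMq : Mq.det = (detX d C (m+1) : ℚ) := by
    rw [hMqdef, det_map_int]
    simp [hM, detX]
  have hadjq : Mq.adjugate (Fin.last m) (Fin.last m) = (detX d C m : ℚ) := by
    rw [Matrix.adjugate_fin_succ_eq_det_submatrix, Fin.succAbove_last]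
    have he : Even ((Fin.last m : ℕ) + (Fin.last m : ℕ)) := ⟨m, by simp⟩
    rw [he.neg_one_pow, one_mul, hMqdef, Matrix.submatrix_map, hM, Xmat_minor,
      det_map_int]
    simp [detX]
  -- Part 1
  have hMk : Mq *ᵥ k = Pi.single (Fin.last m) 1 := by
    funext i
    have h1 : (Mq *ᵥ k) i = ∑ j : Fin (m+1), k j * ((Xmat d C (m+1) i j : ℤ) : ℚ) := by
      simp [Matrix.mulVec, dotProduct, hMqdef, hM, Matrix.map_apply, mul_comm]
    rw [h1, ← hk i, Pi.single_apply]
    rfl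
  have hDk : (detX d C (m+1) : ℚ) * k (Fin.last m) = (detX d C m : ℚ) := by
    have h := congrArg (fun v => Mq.adjugate *ᵥ v) hMk
    simp only [Matrix.mulVec_mulVec, Matrix.adjugate_mul] at h
    have h2 := congrFun h (Fin.last m)
    rw [Matrix.smul_mulVec, Matrix.one_mulVec] at h2
    rw [Matrix.mulVec_single] at h2
    simpa [hdetMq, hadjq] using h2
  have hDne : ((detX d C (m+1) : ℚ)) ≠ 0 := by
    exact_mod_cast hdet
  have part1 : k (Fin.last m) = (detX d C m : ℚ) / (detX d C (m+1) : ℚ) := by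
    rw [eq_div_iff hDne]
    linarith [hDk]
  -- coprimality
  have hcop : IsCoprime (detX d C m) (detX d C (m+1)) := by
    have := detX_coprime d hd C hX.2.2 (m+1) hn
    simpa using this
  -- Part 2
  set D : ℤ := detX d C (m+1) with hD
  set e : Fin (m+1) → ℤ := fw (m+1) (Fin.last m) with he
  have hmemQ : ∀ v : Fin (m+1) → ℤ, v ∈ Qlat d C (m+1) ↔ ∃ y, M *ᵥ y = v := by
    intro v
    have hQ : Qlat d C (m+1) = LinearMap.range (Matrix.mulVecLin M) := by
      rw [Matrix.range_mulVecLin]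
      rfl
    rw [hQ, LinearMap.mem_range]
    simp only [Matrix.mulVecLin_apply]
  have hadjZ : M.adjugate (Fin.last m) (Fin.last m) = detX d C m := adjX_last d C m
  have hadje : M.adjugate *ᵥ e = fun i => M.adjugate i (Fin.last m) := by
    rw [he]
    show M.adjugate *ᵥ Pi.single (Fin.last m) 1 = _
    rw [Matrix.mulVec_single]
    simp
    rfl
  have hDe : D • e ∈ Qlat d C (m+1) := by
    refine (hmemQ _).2 ⟨M.adjugate *ᵥ e, ?_⟩
    rw [Matrix.mulVec_mulVec, Matrix.mul_adjugate, Matrix.smul_mulVec,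
      Matrix.one_mulVec]
    rfl
  have hdvd : ∀ z : ℤ, z • e ∈ Qlat d C (m+1) → D ∣ z := by
    intro z hz
    obtain ⟨y, hy⟩ := (hmemQ _).1 hz
    have h := congrArg (fun v => M.adjugate *ᵥ v) hy
    simp only [Matrix.mulVec_mulVec, Matrix.adjugate_mul] at h
    have h2 := congrFun h (Fin.last m)
    rw [Matrix.smul_mulVec, Matrix.one_mulVec, Matrix.mulVec_smul, hadje] at h2
    simp only [Pi.smul_apply, smul_eq_mul, hadjZ] at h2
    have hdd : D ∣ z * detX d C m := ⟨y (Fin.last m), by rw [← h2]; rfl⟩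
    exact (hcop.symm).dvd_of_dvd_mul_right hdd
  set q : (Fin (m+1) → ℤ) ⧸ Qlat d C (m+1) := Submodule.Quotient.mk e with hq
  have hzq : ∀ z : ℤ, z • q = 0 ↔ z • e ∈ Qlat d C (m+1) := by
    intro z
    rw [hq, ← Submodule.Quotient.mk_smul, Submodule.Quotient.mk_eq_zero]
  have hfin : (D.natAbs) • q = 0 := by
    have h1 : ((D.natAbs : ℤ)) • q = 0 := by
      rw [hzq]
      rcases Int.natAbs_eq D with h | h
      · rw [← h]; exact hDe
      · rw [h] at hDe
        have := (Qlat d C (m+1)).neg_mem hDe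
        simpa using this
    rwa [natCast_zsmul] at h1
  have hdvd1 : addOrderOf q ∣ D.natAbs := addOrderOf_dvd_of_nsmul_eq_zero hfin
  have hdvd2 : D.natAbs ∣ addOrderOf q := by
    have h1 : (addOrderOf q) • q = 0 := addOrderOf_nsmul_eq_zero q
    have h2 : ((addOrderOf q : ℤ)) • q = 0 := by rwa [natCast_zsmul]
    have h3 : D ∣ (addOrderOf q : ℤ) := hdvd _ ((hzq _).1 h2)
    have := Int.natAbs_dvd_natAbs.mpr h3
    simpa using this
  have part2 : addOrderOf q = D.natAbs := Nat.dvd_antisymm hdvd1 hdvd2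
  exact ⟨part1, part2⟩
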